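/- arXiv:2501.18236 — 4 statements merged into one kernel-verified Lean document; each statement's English description precedes it below -/
import Mathlib

section
/- The semantic security advantage is bounded above by the distinguishing security advantage: Adv_ss(P) ≤ Adv_ds(P). That is, sup over probability distributions P_M on the finite message set M, over partitions Π of M, and over measurable maps g : Z → Π of the quantity ( Σ_{m∈M} P_M({m}) · P_m({z : m ∈ g(z)}) − max_{π∈Π} P_M(π) ) is at most max_{m₁,m₂∈M} ‖P_{m₁} − P_{m₂}‖_TV. -/
open MeasureTheory

/-- Total variation distance between two measures. -/
noncomputable def tvDist {Ω : Type*} [MeasurableSpace Ω] (P Q : Measure Ω) : ℝ :=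
  ⨆ A : {A : Set Ω // MeasurableSet A}, |(P A.1).toReal - (Q A.1).toReal|

/-- The semantic security advantage is bounded above by the distinguishing security
advantage: every choice of message distribution `p`, partition `Part` of the message set,
and measurable guessing map `g` yields an advantage at most
`max_{m₁,m₂} ‖P m₁ − P m₂‖_TV`. -/
theorem semantic_le_distinguishing
    {M : Type*} [Fintype M] [Nonempty M] [DecidableEq M]
    {Z : Type*} [MeasurableSpace Z]
    (P : M → Measure Z) (hP : ∀ m, IsProbabilityMeasure (P m))
    (p : M → ℝ) (hp0 : ∀ m, 0 ≤ p m) (hp1 : ∑ m, p m = 1)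
    (Part : Finset (Finset M))
    (hne : ∀ π ∈ Part, π.Nonempty)
    (hdisj : ∀ π₁ ∈ Part, ∀ π₂ ∈ Part, π₁ ≠ π₂ → Disjoint π₁ π₂)
    (hcover : ∀ m : M, ∃ π ∈ Part, m ∈ π)
    (g : Z → Finset M) (hg : ∀ z, g z ∈ Part)
    (hgmeas : ∀ π : Finset M, MeasurableSet {z | g z = π}) :
    (∑ m, p m * (P m {z | m ∈ g z}).toReal)
        - (⨆ π ∈ (Part : Set (Finset M)), ∑ m ∈ π, p m)
      ≤ ⨆ mm : M × M, tvDist (P mm.1) (P mm.2) := by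
  classical
  obtain ⟨m₀⟩ := ‹Nonempty M›
  have hprob : ∀ (m : M) (A : Set Z), (P m A).toReal ≤ 1 := by
    intro m A
    have h := prob_le_one (μ := P m) (s := A)
    have := ENNReal.toReal_mono (by norm_num) h
    simpa using this
  have hnn : ∀ (m : M) (A : Set Z), 0 ≤ (P m A).toReal := fun m A => ENNReal.toReal_nonneg
  -- tvDist bounded by 1
  have htv_le_one : ∀ m m' : M, tvDist (P m) (P m') ≤ 1 := by
    intro m m'
    apply ciSup_le
    intro A
    rw [abs_sub_le_iff]
    constructor <;> nlinarith [hprob m A.1, hprob m' A.1, hnn m A.1, hnn m' A.1]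
  have hbddA : ∀ m m' : M, BddAbove (Set.range fun A : {A : Set Z // MeasurableSet A} =>
      |(P m A.1).toReal - (P m' A.1).toReal|) := by
    intro m m'
    refine ⟨1, ?_⟩
    rintro x ⟨A, rfl⟩
    rw [abs_sub_le_iff]
    constructor <;> nlinarith [hprob m A.1, hprob m' A.1, hnn m A.1, hnn m' A.1]
  set D := ⨆ mm : M × M, tvDist (P mm.1) (P mm.2) with hD
  have hbddD : BddAbove (Set.range fun mm : M × M => tvDist (P mm.1) (P mm.2)) := by
    refine ⟨1, ?_⟩
    rintro x ⟨mm, rfl⟩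
    exact htv_le_one _ _
  have hkey : ∀ (m : M) (A : Set Z), MeasurableSet A →
      (P m A).toReal ≤ (P m₀ A).toReal + D := by
    intro m A hA
    have h1 : (P m A).toReal - (P m₀ A).toReal ≤ tvDist (P m) (P m₀) :=
      le_trans (le_abs_self _) (le_ciSup (hbddA m m₀) ⟨A, hA⟩)
    have h2 : tvDist (P m) (P m₀) ≤ D := le_ciSup hbddD (m, m₀)
    linarith
  -- block of m
  have hAeq : ∀ m : M, {z | m ∈ g z} =
      ⋃ π ∈ Part.filter (fun π => m ∈ π), {z | g z = π} := by
    intro m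
    ext z
    simp only [Set.mem_setOf_eq, Set.mem_iUnion, Finset.mem_filter]
    constructor
    · intro h; exact ⟨g z, ⟨hg z, h⟩, rfl⟩
    · rintro ⟨π, ⟨_, hmπ⟩, hz⟩; rw [hz]; exact hmπ
  have hpd : ∀ s : Finset (Finset M),
      (s : Set (Finset M)).PairwiseDisjoint (fun π => {z | g z = π}) := by
    intro s π₁ _ π₂ _ hne12
    simp only [Function.onFun, Set.disjoint_left]
    intro z hz1 hz2
    exact hne12 (hz1.symm.trans hz2)
  have hAmeas : ∀ m : M, MeasurableSet {z | m ∈ g z} := by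
    intro m
    rw [hAeq m]
    exact (Part.filter fun π => m ∈ π).measurableSet_biUnion (fun π _ => hgmeas π)
  have hntop : ∀ (A : Set Z), P m₀ A ≠ ⊤ := fun A => measure_ne_top _ _
  have hQAm : ∀ m : M, (P m₀ {z | m ∈ g z}).toReal =
      ∑ π ∈ Part.filter (fun π => m ∈ π), (P m₀ {z | g z = π}).toReal := by
    intro m
    rw [hAeq m, measure_biUnion_finset (hpd _) (fun π _ => hgmeas π),
      ENNReal.toReal_sum (fun π _ => hntop _)]
  have hsum_univ : ∑ π ∈ Part, (P m₀ {z | g z = π}).toReal = 1 := by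
    have huniv : (⋃ π ∈ Part, {z | g z = π}) = Set.univ := by
      ext z
      simp only [Set.mem_iUnion, Set.mem_univ, iff_true, Set.mem_setOf_eq]
      exact ⟨g z, hg z, rfl⟩
    have := measure_biUnion_finset (μ := P m₀) (hpd Part) (fun π _ => hgmeas π)
    rw [huniv, measure_univ] at this
    rw [← ENNReal.toReal_sum (fun π _ => hntop _), ← this]
    simp
  -- W
  set W := ⨆ π ∈ (Part : Set (Finset M)), ∑ m ∈ π, p m with hWdef
  have hwle1 : ∀ π : Finset M, ∑ m ∈ π, p m ≤ 1 := by
    intro π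
    rw [← hp1]
    exact Finset.sum_le_sum_of_subset_of_nonneg (Finset.subset_univ π) (fun m _ _ => hp0 m)
  have hW : ∀ π ∈ Part, ∑ m ∈ π, p m ≤ W := by
    intro π hπ
    have hb : BddAbove (Set.range fun π' : Finset M =>
        ⨆ _ : π' ∈ (Part : Set (Finset M)), ∑ m ∈ π', p m) := by
      refine ⟨1, ?_⟩
      rintro x ⟨π', rfl⟩
      by_cases h : π' ∈ (Part : Set (Finset M))
      · simp only [ciSup_pos h]; exact hwle1 π'
      · simp only [ciSup_neg h, Real.sSup_empty]
        norm_num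
    have h2 : (⨆ _ : π ∈ (Part : Set (Finset M)), ∑ m ∈ π, p m) ≤ W := le_ciSup hb π
    rwa [ciSup_pos (Finset.mem_coe.mpr hπ)] at h2
  -- main chain
  have step1 : (∑ m, p m * (P m {z | m ∈ g z}).toReal)
      ≤ (∑ m, p m * (P m₀ {z | m ∈ g z}).toReal) + D := by
    have : (∑ m, p m * (P m {z | m ∈ g z}).toReal)
        ≤ ∑ m, p m * ((P m₀ {z | m ∈ g z}).toReal + D) := by
      apply Finset.sum_le_sum
      intro m _
      exact mul_le_mul_of_nonneg_left (hkey m _ (hAmeas m)) (hp0 m)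
    calc (∑ m, p m * (P m {z | m ∈ g z}).toReal)
        ≤ ∑ m, p m * ((P m₀ {z | m ∈ g z}).toReal + D) := this
      _ = (∑ m, p m * (P m₀ {z | m ∈ g z}).toReal) + (∑ m, p m) * D := by
          rw [Finset.sum_mul]
          rw [← Finset.sum_add_distrib]
          congr 1; ext m; ring
      _ = (∑ m, p m * (P m₀ {z | m ∈ g z}).toReal) + D := by rw [hp1, one_mul]
  have step2 : (∑ m, p m * (P m₀ {z | m ∈ g z}).toReal) ≤ W := by
    have heq : (∑ m, p m * (P m₀ {z | m ∈ g z}).toReal)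
        = ∑ π ∈ Part, (P m₀ {z | g z = π}).toReal * ∑ m ∈ π, p m := by
      simp_rw [hQAm, Finset.mul_sum, Finset.sum_filter]
      rw [Finset.sum_comm]
      refine Finset.sum_congr rfl fun π _ => ?_
      rw [Finset.sum_ite_mem, Finset.univ_inter]
      refine Finset.sum_congr rfl fun m _ => ?_
      ring
    rw [heq]
    calc ∑ π ∈ Part, (P m₀ {z | g z = π}).toReal * ∑ m ∈ π, p m
        ≤ ∑ π ∈ Part, (P m₀ {z | g z = π}).toReal * W := by
          apply Finset.sum_le_sum
          intro π hπ
          exact mul_le_mul_of_nonneg_left (hW π hπ) (hnn m₀ _)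
      _ = W := by rw [← Finset.sum_mul, hsum_univ, one_mul]
  have hfinal : (∑ m, p m * (P m {z | m ∈ g z}).toReal) ≤ W + D := by
    linarith
  linarith
end

section
/- The distinguishing security advantage is bounded above by twice the semantic security advantage: Adv_ds(P) ≤ 2 · Adv_ss(P). That is, max_{m₁,m₂∈M} ‖P_{m₁} − P_{m₂}‖_TV is at most 2 · sup over probability distributions P_M on M, partitions Π of M, and measurable maps g : Z → Π of ( Σ_{m∈M} P_M({m}) · P_m({z : m ∈ g(z)}) − max_{π∈Π} P_M(π) ). -/
open MeasureTheory

lemma real_biSup_eq {β : Type*} (s : Set β) (f : β → ℝ) (c : ℝ) (hc : 0 ≤ c)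
    (hval : ∀ b ∈ s, f b = c) (hne : ∃ b, b ∈ s) : (⨆ b ∈ s, f b) = c := by
  obtain ⟨b₀, hb₀⟩ := hne
  apply le_antisymm
  · exact Real.iSup_le (fun b => Real.iSup_le (fun hb => (hval b hb).le) hc) hc
  · have hbdd : BddAbove (Set.range fun b => ⨆ _ : b ∈ s, f b) := by
      refine ⟨c, ?_⟩; rintro _ ⟨b, rfl⟩
      exact Real.iSup_le (fun hb => (hval b hb).le) hc
    calc c = f b₀ := (hval b₀ hb₀).symm
      _ = ⨆ _ : b₀ ∈ s, f b₀ := (ciSup_pos (f := fun _ : b₀ ∈ s => f b₀) hb₀).symm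
      _ ≤ ⨆ b ∈ s, f b := le_ciSup hbdd b₀

section Aux

variable {M : Type*} [Fintype M] [Nonempty M] [DecidableEq M]
    {Z : Type*} [MeasurableSpace Z]

/-- The semantic security advantage set. -/
def advSet (P : M → Measure Z) : Set ℝ :=
  {a : ℝ |
          ∃ (p : M → ℝ) (Part : Finset (Finset M)) (g : Z → Finset M),
            (∀ m, 0 ≤ p m) ∧ (∑ m, p m = 1) ∧
            (∀ π ∈ Part, π.Nonempty) ∧
            (∀ π₁ ∈ Part, ∀ π₂ ∈ Part, π₁ ≠ π₂ → Disjoint π₁ π₂) ∧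
            (∀ m : M, ∃ π ∈ Part, m ∈ π) ∧
            (∀ z, g z ∈ Part) ∧
            (∀ π : Finset M, MeasurableSet {z | g z = π}) ∧
            a = (∑ m, p m * (P m {z | m ∈ g z}).toReal)
                  - (⨆ π ∈ (Part : Set (Finset M)), ∑ m ∈ π, p m)}

lemma advSet_bddAbove (P : M → Measure Z) (hP : ∀ m, IsProbabilityMeasure (P m)) :
    BddAbove (advSet P) := by
  refine ⟨1, ?_⟩
  rintro a ⟨p, Part, g, hp0, hp1, hne, hdisj, hcov, hg, hmeas, rfl⟩
  have hsum_le : (∑ m, p m * (P m {z | m ∈ g z}).toReal) ≤ 1 := by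
    calc (∑ m, p m * (P m {z | m ∈ g z}).toReal) ≤ ∑ m, p m := by
          refine Finset.sum_le_sum fun m _ => ?_
          have h1 : (P m {z | m ∈ g z}).toReal ≤ 1 :=
            ENNReal.toReal_le_of_le_ofReal zero_le_one (by simpa using prob_le_one)
          calc p m * (P m {z | m ∈ g z}).toReal ≤ p m * 1 :=
                mul_le_mul_of_nonneg_left h1 (hp0 m)
            _ = p m := mul_one _
      _ = 1 := hp1
  have hsup_nonneg : 0 ≤ ⨆ π ∈ (Part : Set (Finset M)), ∑ m ∈ π, p m := by
    obtain ⟨π₀, hπ₀, _⟩ := hcov (Classical.arbitrary M)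
    have hbdd : BddAbove (Set.range fun π => ⨆ _ : π ∈ (Part : Set (Finset M)), ∑ m ∈ π, p m) := by
      refine ⟨1, ?_⟩
      rintro _ ⟨π, rfl⟩
      refine Real.iSup_le (fun _ => ?_) zero_le_one
      calc ∑ m ∈ π, p m ≤ ∑ m, p m :=
            Finset.sum_le_sum_of_subset_of_nonneg (Finset.subset_univ π)
              (fun m _ _ => hp0 m)
        _ = 1 := hp1
    calc (0:ℝ) ≤ ∑ m ∈ π₀, p m := Finset.sum_nonneg fun m _ => hp0 m
      _ = ⨆ _ : π₀ ∈ (Part : Set (Finset M)), ∑ m ∈ π₀, p m :=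
          (ciSup_pos (f := fun _ : π₀ ∈ (Part : Set (Finset M)) => ∑ m ∈ π₀, p m)
            (by simpa using hπ₀)).symm
      _ ≤ ⨆ π ∈ (Part : Set (Finset M)), ∑ m ∈ π, p m := le_ciSup hbdd π₀
  linarith

lemma zero_mem_advSet (P : M → Measure Z) (hP : ∀ m, IsProbabilityMeasure (P m)) :
    (0:ℝ) ∈ advSet P := by
  classical
  have hcard : (0:ℝ) < (Fintype.card M : ℝ) := by exact_mod_cast Fintype.card_pos
  refine ⟨fun _ => 1 / (Fintype.card M : ℝ), {Finset.univ}, fun _ => Finset.univ,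
    ?_, ?_, ?_, ?_, ?_, ?_, ?_, ?_⟩
  · intro m; positivity
  · simp only [Finset.sum_const, Finset.card_univ, nsmul_eq_mul]
    field_simp
  · intro π hπ
    simp only [Finset.mem_singleton] at hπ
    subst hπ
    exact Finset.univ_nonempty
  · intro π₁ h₁ π₂ h₂ h
    simp only [Finset.mem_singleton] at h₁ h₂
    exact absurd (h₁.trans h₂.symm) h
  · intro m; exact ⟨Finset.univ, by simp⟩
  · intro z; simp
  · intro π
    by_cases h : π = Finset.univ
    · have he : {z : Z | (fun _ : Z => (Finset.univ : Finset M)) z = π} = Set.univ := by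
        ext z; simp [h]
      rw [he]; exact MeasurableSet.univ
    · have he : {z : Z | (fun _ : Z => (Finset.univ : Finset M)) z = π} = ∅ := by
        ext z; simp only [Set.mem_setOf_eq, Set.mem_empty_iff_false, iff_false]
        exact fun hh => h hh.symm
      rw [he]; exact MeasurableSet.empty
  · have h1 : (∑ m : M, (1 / (Fintype.card M : ℝ)) *
        (P m {z | m ∈ (Finset.univ : Finset M)}).toReal) = 1 := by
      have he : ∀ m : M, {z : Z | m ∈ (Finset.univ : Finset M)} = Set.univ := by
        intro m; ext z; simp
      simp only [he]
      have hu : ∀ m : M, (P m Set.univ).toReal = 1 := fun m => by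
        simp [(hP m).measure_univ]
      simp only [hu, mul_one, Finset.sum_const, Finset.card_univ, nsmul_eq_mul]
      field_simp
    have h2 : (⨆ π ∈ (({Finset.univ} : Finset (Finset M)) : Set (Finset M)),
        ∑ m ∈ π, (1 / (Fintype.card M : ℝ))) = 1 := by
      refine real_biSup_eq _ _ 1 zero_le_one ?_ ⟨Finset.univ, by simp⟩
      intro π hπ
      simp only [Finset.coe_singleton, Set.mem_singleton_iff] at hπ
      subst hπ
      simp only [Finset.sum_const, Finset.card_univ, nsmul_eq_mul]
      field_simp
    rw [h1, h2]
    ring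

lemma half_diff_mem_advSet (P : M → Measure Z) (hP : ∀ m, IsProbabilityMeasure (P m))
    {m₁ m₂ : M} (hne : m₁ ≠ m₂) {A : Set Z} (hA : MeasurableSet A) :
    ((P m₁ A).toReal - (P m₂ A).toReal) / 2 ∈ advSet P := by
  classical
  set p : M → ℝ := fun m => if m = m₁ then 1/2 else if m = m₂ then 1/2 else 0 with hp
  set E : Finset M := Finset.univ.erase m₁ with hE
  have hm₂E : m₂ ∈ E := Finset.mem_erase.mpr ⟨Ne.symm hne, Finset.mem_univ m₂⟩
  have hsE : ({m₁} : Finset M) ≠ E := by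
    intro h
    have hmem : m₂ ∈ ({m₁} : Finset M) := by rw [h]; exact hm₂E
    exact (Ne.symm hne) (Finset.mem_singleton.1 hmem)
  set g : Z → Finset M := fun z => if z ∈ A then {m₁} else E with hg
  have key : ∀ (c : M → ℝ), ∑ m, p m * c m = (1/2) * c m₁ + (1/2) * c m₂ := by
    intro c
    have hptw : ∀ m, p m * c m =
        (if m = m₁ then (1/2) * c m else 0) + (if m = m₂ then (1/2) * c m else 0) := by
      intro m
      by_cases h1 : m = m₁
      · subst h1; simp [hp, hne]
      · by_cases h2 : m = m₂
        · subst h2; simp [hp, h1]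
        · simp [hp, h1, h2]
    rw [Finset.sum_congr rfl (fun m _ => hptw m), Finset.sum_add_distrib,
      Finset.sum_ite_eq', Finset.sum_ite_eq']
    simp
  have hp1 : ∑ m, p m = 1 := by
    have h := key (fun _ => 1)
    simp only [mul_one] at h
    rw [h]; norm_num
  have hpm₁ : p m₁ = 1/2 := by simp [hp]
  have hsumE : ∑ m ∈ E, p m = 1/2 := by
    have h := Finset.add_sum_erase Finset.univ p (Finset.mem_univ m₁)
    rw [hp1, hpm₁] at h
    linarith
  set Part : Finset (Finset M) := {{m₁}, E} with hPart
  have hA1 : {z : Z | m₁ ∈ g z} = A := by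
    ext z
    by_cases hz : z ∈ A <;> simp [hg, hz, hE]
  have hA2 : {z : Z | m₂ ∈ g z} = Aᶜ := by
    ext z
    by_cases hz : z ∈ A <;> simp [hg, hz, hE, Ne.symm hne]
  have hcompl : (P m₂ Aᶜ).toReal = 1 - (P m₂ A).toReal := by
    have h := measure_add_measure_compl (μ := P m₂) hA
    rw [(hP m₂).measure_univ] at h
    have h1 : (P m₂ A) ≠ ⊤ := measure_ne_top _ _
    have h2 : (P m₂ Aᶜ) ≠ ⊤ := measure_ne_top _ _
    have h3 := congrArg ENNReal.toReal h
    rw [ENNReal.toReal_add h1 h2] at h3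
    simp at h3
    linarith
  have hsup : (⨆ π ∈ (Part : Set (Finset M)), ∑ m ∈ π, p m) = 1/2 := by
    refine real_biSup_eq _ _ (1/2) (by norm_num) ?_ ⟨{m₁}, by simp [hPart]⟩
    intro π hπ
    simp only [hPart, Finset.coe_insert, Finset.coe_singleton, Set.mem_insert_iff,
      Set.mem_singleton_iff] at hπ
    rcases hπ with rfl | rfl
    · simpa using hpm₁
    · exact hsumE
  refine ⟨p, Part, g, ?_, hp1, ?_, ?_, ?_, ?_, ?_, ?_⟩
  · intro m; simp only [hp]
    split
    · norm_num
    · split <;> norm_num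
  · intro π hπ
    simp only [hPart, Finset.mem_insert, Finset.mem_singleton] at hπ
    rcases hπ with rfl | rfl
    · exact ⟨m₁, by simp⟩
    · exact ⟨m₂, hm₂E⟩
  · intro π₁ h₁ π₂ h₂ h
    simp only [hPart, Finset.mem_insert, Finset.mem_singleton] at h₁ h₂
    rcases h₁ with rfl | rfl <;> rcases h₂ with rfl | rfl
    · exact absurd rfl h
    · simp only [Finset.disjoint_left]
      intro a ha; simp only [Finset.mem_singleton] at ha; subst ha; simp [hE]
    · simp only [Finset.disjoint_left]
      intro a ha hb; simp only [Finset.mem_singleton] at hb; subst hb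
      simp [hE] at ha
    · exact absurd rfl h
  · intro m
    by_cases h : m = m₁
    · exact ⟨{m₁}, by simp [hPart], by simp [h]⟩
    · exact ⟨E, by simp [hPart], by simp [hE, h]⟩
  · intro z
    simp only [hg, hPart]
    split <;> simp
  · intro π
    by_cases h1 : π = {m₁}
    · have he : {z : Z | g z = π} = A := by
        ext z; by_cases hz : z ∈ A <;> simp [hg, hz, h1, hsE, Ne.symm hsE]
      rw [he]; exact hA
    · by_cases h2 : π = E
      · have he : {z : Z | g z = π} = Aᶜ := by
          ext z; by_cases hz : z ∈ A <;> simp [hg, hz, h2, hsE]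
        rw [he]; exact hA.compl
      · have e1 : ({m₁} : Finset M) ≠ π := fun hh => h1 hh.symm
        have e2 : E ≠ π := fun hh => h2 hh.symm
        have he : {z : Z | g z = π} = ∅ := by
          ext z; by_cases hz : z ∈ A <;> simp [hg, hz, e1, e2]
        rw [he]; exact MeasurableSet.empty
  · rw [key (fun m => (P m {z | m ∈ g z}).toReal), hsup]
    rw [hA1, hA2, hcompl]
    ring

end Aux

/-- The distinguishing security advantage `max_{m₁,m₂} ‖P m₁ − P m₂‖_TV` is bounded above
by twice the semantic security advantage, the latter being the supremum over message
distributions `p`, partitions `Part` of the message set, and measurable guessing maps `g`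
of the eavesdropper's advantage over pure guessing. -/
theorem distinguishing_le_two_mul_semantic
    {M : Type*} [Fintype M] [Nonempty M] [DecidableEq M]
    {Z : Type*} [MeasurableSpace Z]
    (P : M → Measure Z) (hP : ∀ m, IsProbabilityMeasure (P m)) :
    (⨆ mm : M × M, tvDist (P mm.1) (P mm.2))
      ≤ 2 * sSup {a : ℝ |
          ∃ (p : M → ℝ) (Part : Finset (Finset M)) (g : Z → Finset M),
            (∀ m, 0 ≤ p m) ∧ (∑ m, p m = 1) ∧
            (∀ π ∈ Part, π.Nonempty) ∧
            (∀ π₁ ∈ Part, ∀ π₂ ∈ Part, π₁ ≠ π₂ → Disjoint π₁ π₂) ∧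
            (∀ m : M, ∃ π ∈ Part, m ∈ π) ∧
            (∀ z, g z ∈ Part) ∧
            (∀ π : Finset M, MeasurableSet {z | g z = π}) ∧
            a = (∑ m, p m * (P m {z | m ∈ g z}).toReal)
                  - (⨆ π ∈ (Part : Set (Finset M)), ∑ m ∈ π, p m)} := by
  show (⨆ mm : M × M, tvDist (P mm.1) (P mm.2)) ≤ 2 * sSup (advSet P)
  have hbdd := advSet_bddAbove P hP
  have h0 : (0:ℝ) ≤ sSup (advSet P) := le_csSup hbdd (zero_mem_advSet P hP)
  refine ciSup_le fun mm => ?_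
  refine ciSup_le fun A => ?_
  obtain ⟨m₁, m₂⟩ := mm
  by_cases h : m₁ = m₂
  · subst h
    simp only [sub_self, abs_zero]
    linarith
  · rw [abs_sub_le_iff]
    constructor
    · have := le_csSup hbdd (half_diff_mem_advSet P hP h A.2)
      linarith
    · have := le_csSup hbdd (half_diff_mem_advSet P hP (Ne.symm h) A.2)
      linarith
end

section
/- For every J > 0, ∫_0^∞ exp( − t² / (2(1 + t/3)J) ) dt ≤ (√(3π)/2)·√J + 3J. -/
open MeasureTheory

lemma integral_exp_neg_mul_Ioi_zero {b : ℝ} (hb : 0 < b) :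
    ∫ x in Set.Ioi (0 : ℝ), Real.exp (-(b * x)) = 1 / b := by
  have := integral_comp_mul_left_Ioi (fun y => Real.exp (-y)) 0 hb
  simp only [mul_zero, integral_exp_neg_Ioi, neg_zero, Real.exp_zero, smul_eq_mul,
    mul_one] at this
  rw [this, one_div]

/-- For every `J > 0`,
`∫_0^∞ exp(−t²/(2(1+t/3)J)) dt ≤ (√(3π)/2)√J + 3J`. -/
theorem integral_exp_bound (J : ℝ) (hJ : 0 < J) :
    ∫ t in Set.Ioi (0 : ℝ), Real.exp (-(t ^ 2) / (2 * (1 + t / 3) * J))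
      ≤ Real.sqrt (3 * Real.pi) / 2 * Real.sqrt J + 3 * J := by
  set b : ℝ := 1 / (3 * J) with hb_def
  have hb : 0 < b := by positivity
  -- pointwise bound on Ioi 0
  have hbound : ∀ t ∈ Set.Ioi (0 : ℝ),
      Real.exp (-(t ^ 2) / (2 * (1 + t / 3) * J))
        ≤ Real.exp (-b * t ^ 2) + Real.exp (-(b * t)) := by
    intro t ht
    have ht : 0 < t := ht
    have hden : 0 < 2 * (1 + t / 3) * J := by positivity
    rcases le_total t 1 with h1 | h1
    · have key : -(t ^ 2) / (2 * (1 + t / 3) * J) ≤ -b * t ^ 2 := by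
        rw [neg_div, neg_mul, neg_le_neg_iff, hb_def, div_mul_eq_mul_div, one_mul,
          div_le_div_iff₀ (by positivity) hden]
        nlinarith [mul_nonneg (mul_nonneg (sq_nonneg t) hJ.le) (sub_nonneg.2 h1)]
      calc Real.exp (-(t ^ 2) / (2 * (1 + t / 3) * J)) ≤ Real.exp (-b * t ^ 2) :=
            Real.exp_le_exp.2 key
        _ ≤ _ := le_add_of_nonneg_right (Real.exp_pos _).le
    · have key : -(t ^ 2) / (2 * (1 + t / 3) * J) ≤ -(b * t) := by
        rw [neg_div, neg_le_neg_iff, hb_def, div_mul_eq_mul_div, div_le_div_iff₀ (by positivity) hden]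
        have h2 : t ≤ t ^ 2 := by nlinarith
        nlinarith [mul_le_mul_of_nonneg_left h2 hJ.le]
      calc Real.exp (-(t ^ 2) / (2 * (1 + t / 3) * J)) ≤ Real.exp (-(b * t)) :=
            Real.exp_le_exp.2 key
        _ ≤ _ := le_add_of_nonneg_left (Real.exp_pos _).le
  have hint1 : IntegrableOn (fun t => Real.exp (-b * t ^ 2)) (Set.Ioi 0) :=
    (integrable_exp_neg_mul_sq hb).integrableOn
  have hint2 : IntegrableOn (fun t => Real.exp (-(b * t))) (Set.Ioi 0) := by
    simpa [neg_mul] using exp_neg_integrableOn_Ioi 0 hb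
  have hintRHS : IntegrableOn (fun t => Real.exp (-b * t ^ 2) + Real.exp (-(b * t)))
      (Set.Ioi 0) := hint1.add hint2
  have hintLHS : IntegrableOn (fun t => Real.exp (-(t ^ 2) / (2 * (1 + t / 3) * J)))
      (Set.Ioi 0) := by
    refine Integrable.mono' hintRHS ?_ ?_
    · exact (Real.measurable_exp.comp (by measurability)).aestronglyMeasurable
    · filter_upwards [ae_restrict_mem measurableSet_Ioi] with t ht
      rw [Real.norm_eq_abs, abs_of_pos (Real.exp_pos _)]
      exact hbound t ht
  have hmono : ∫ t in Set.Ioi (0 : ℝ), Real.exp (-(t ^ 2) / (2 * (1 + t / 3) * J))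
      ≤ ∫ t in Set.Ioi (0 : ℝ), (Real.exp (-b * t ^ 2) + Real.exp (-(b * t))) :=
    setIntegral_mono_on hintLHS hintRHS measurableSet_Ioi hbound
  have hsplit : ∫ t in Set.Ioi (0 : ℝ), (Real.exp (-b * t ^ 2) + Real.exp (-(b * t)))
      = Real.sqrt (Real.pi / b) / 2 + 1 / b := by
    rw [integral_add hint1 hint2, integral_gaussian_Ioi, integral_exp_neg_mul_Ioi_zero hb]
  have h1 : Real.sqrt (Real.pi / b) / 2 = Real.sqrt (3 * Real.pi) / 2 * Real.sqrt J := by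
    rw [hb_def, one_div]
    have h3 : Real.pi / (3 * J)⁻¹ = 3 * Real.pi * J := by field_simp
    rw [h3, Real.sqrt_mul (by positivity)]
    ring
  have h2 : 1 / b = 3 * J := by rw [hb_def]; field_simp
  rw [hsplit, h1, h2] at hmono
  exact hmono
end

section
/- Let V be a nonnegative real-valued random variable on a probability space and let J > 0. Suppose that for every t > 0, P(V ≥ 1 + t) ≤ exp( − t² / (2(1 + t/3)J) ). Then E[ max(V − 1, 0) ] ≤ (√(3π)/2)·√J + 3J. -/
open MeasureTheory

lemma exp_tail_bound (J : ℝ) (hJ : 0 < J) (t : ℝ) (ht : 0 < t) :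
    Real.exp (-(t ^ 2) / (2 * (1 + t / 3) * J)) ≤
      Real.exp (-(t ^ 2) / (3 * J)) + Real.exp (-t / (3 * J)) := by
  have h13 : (0:ℝ) < 1 + t / 3 := by linarith
  have hD : 0 < 2 * (1 + t / 3) * J := by positivity
  have h3J : (0:ℝ) < 3 * J := by linarith
  rcases le_total t (3/2) with hle | hge
  · have h1 : -(t ^ 2) / (2 * (1 + t / 3) * J) ≤ -(t ^ 2) / (3 * J) := by
      rw [div_le_div_iff₀ hD h3J]
      nlinarith [mul_nonneg (mul_nonneg (sq_nonneg t) hJ.le)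
        (by linarith : (0:ℝ) ≤ 1 - 2*t/3)]
    have := Real.exp_le_exp.mpr h1
    nlinarith [Real.exp_pos (-t / (3 * J))]
  · have h1 : -(t ^ 2) / (2 * (1 + t / 3) * J) ≤ -t / (3 * J) := by
      rw [div_le_div_iff₀ hD h3J]
      nlinarith [mul_nonneg (mul_nonneg ht.le hJ.le)
        (by linarith : (0:ℝ) ≤ 7*t/3 - 2)]
    have := Real.exp_le_exp.mpr h1
    nlinarith [Real.exp_pos (-(t ^ 2) / (3 * J))]

/-- If `V ≥ 0` is an integrable random variable such that for every `t > 0`,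
`P(V ≥ 1 + t) ≤ exp(−t²/(2(1+t/3)J))`, then
`E[max (V − 1) 0] ≤ (√(3π)/2)√J + 3J`. -/
theorem expectation_pos_part_le
    {Ω : Type*} [MeasurableSpace Ω] (P : Measure Ω) [IsProbabilityMeasure P]
    (V : Ω → ℝ) (hVmeas : Measurable V) (hV0 : ∀ ω, 0 ≤ V ω)
    (hVint : Integrable V P)
    (J : ℝ) (hJ : 0 < J)
    (htail : ∀ t : ℝ, 0 < t →
      (P {ω | 1 + t ≤ V ω}).toReal ≤ Real.exp (-(t ^ 2) / (2 * (1 + t / 3) * J))) :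
    ∫ ω, max (V ω - 1) 0 ∂P ≤ Real.sqrt (3 * Real.pi) / 2 * Real.sqrt J + 3 * J := by
  have h3J : (0:ℝ) < 3 * J := by linarith
  set g : ℝ → ℝ := fun t => Real.exp (-(t ^ 2) / (3 * J)) + Real.exp (-t / (3 * J)) with hg
  -- integrability of the two pieces of g
  have hint1 : IntegrableOn (fun t : ℝ => Real.exp (-(t ^ 2) / (3 * J))) (Set.Ioi 0) := by
    have : Integrable (fun t : ℝ => Real.exp (-(3 * J)⁻¹ * t ^ 2)) :=
      integrable_exp_neg_mul_sq (by positivity)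
    refine (this.integrableOn).congr_fun (fun t _ => ?_) measurableSet_Ioi
    dsimp only; rw [neg_mul, ← div_eq_inv_mul, neg_div]
  have hint2 : IntegrableOn (fun t : ℝ => Real.exp (-t / (3 * J))) (Set.Ioi 0) := by
    have : IntegrableOn (fun t : ℝ => Real.exp (-(3 * J)⁻¹ * t)) (Set.Ioi 0) :=
      exp_neg_integrableOn_Ioi 0 (by positivity)
    refine this.congr_fun (fun t _ => ?_) measurableSet_Ioi
    dsimp only; rw [neg_mul, ← div_eq_inv_mul, neg_div]
  have hintg : IntegrableOn g (Set.Ioi 0) := hint1.add hint2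
  -- layer cake
  have hWint : Integrable (fun ω => max (V ω - 1) 0) P :=
    (hVint.sub (integrable_const 1)).pos_part
  have key : ∫ ω, max (V ω - 1) 0 ∂P
      = ∫ t in Set.Ioi 0, (P {ω | t ≤ max (V ω - 1) 0}).toReal :=
    hWint.integral_eq_integral_meas_le
      (Filter.Eventually.of_forall fun ω => le_max_right _ _)
  -- pointwise bound on the tail function, on Ioi 0
  have hbound : ∀ t ∈ Set.Ioi (0:ℝ),
      (P {ω | t ≤ max (V ω - 1) 0}).toReal ≤ g t := by
    intro t ht
    rw [Set.mem_Ioi] at ht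
    have hset : {ω | t ≤ max (V ω - 1) 0} = {ω | 1 + t ≤ V ω} := by
      ext ω
      simp only [Set.mem_setOf_eq, le_max_iff]
      constructor
      · rintro (h | h) <;> [linarith; linarith]
      · intro h; left; linarith
    rw [hset]
    exact (htail t ht).trans (exp_tail_bound J hJ t ht)
  -- the tail function is integrable on Ioi 0 (antitone, dominated by g)
  have htailmeas : Measurable (fun t : ℝ => (P {ω | t ≤ max (V ω - 1) 0}).toReal) := by
    apply Measurable.ennreal_toReal
    exact Antitone.measurable fun s t hst =>
      measure_mono fun ω h => le_trans hst h
  have htailint : IntegrableOn (fun t : ℝ => (P {ω | t ≤ max (V ω - 1) 0}).toReal)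
      (Set.Ioi 0) := by
    refine Integrable.mono' hintg htailmeas.aestronglyMeasurable.restrict ?_
    filter_upwards [ae_restrict_mem measurableSet_Ioi] with t ht
    rw [Real.norm_of_nonneg ENNReal.toReal_nonneg]
    exact hbound t ht
  -- compute the integral of g
  have hI1 : ∫ t in Set.Ioi (0:ℝ), Real.exp (-(t ^ 2) / (3 * J))
      = Real.sqrt (3 * Real.pi) / 2 * Real.sqrt J := by
    have : ∫ t in Set.Ioi (0:ℝ), Real.exp (-(3 * J)⁻¹ * t ^ 2)
        = Real.sqrt (Real.pi / (3 * J)⁻¹) / 2 := integral_gaussian_Ioi _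
    rw [setIntegral_congr_fun measurableSet_Ioi
      (fun t _ => by simp only [neg_div, div_eq_inv_mul, neg_mul, mul_neg] :
        Set.EqOn (fun t : ℝ => Real.exp (-(t ^ 2) / (3 * J)))
          (fun t : ℝ => Real.exp (-(3 * J)⁻¹ * t ^ 2)) (Set.Ioi 0)), this]
    rw [show Real.pi / (3 * J)⁻¹ = 3 * Real.pi * J by field_simp,
      Real.sqrt_mul (by positivity)]
    ring
  have hI2 : ∫ t in Set.Ioi (0:ℝ), Real.exp (-t / (3 * J)) = 3 * J := by
    have hb : (0:ℝ) < (3 * J)⁻¹ := by positivity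
    have := integral_comp_mul_left_Ioi (fun x => Real.exp (-x)) 0 hb
    simp only [mul_zero, integral_exp_neg_Ioi_zero, smul_eq_mul, mul_one, inv_inv] at this
    rw [setIntegral_congr_fun measurableSet_Ioi
      (fun t _ => by simp only [neg_div, div_eq_inv_mul, mul_neg] :
        Set.EqOn (fun t : ℝ => Real.exp (-t / (3 * J)))
          (fun t : ℝ => Real.exp (-((3 * J)⁻¹ * t))) (Set.Ioi 0))]
    exact this
  calc ∫ ω, max (V ω - 1) 0 ∂P
      = ∫ t in Set.Ioi 0, (P {ω | t ≤ max (V ω - 1) 0}).toReal := key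
    _ ≤ ∫ t in Set.Ioi 0, g t :=
        setIntegral_mono_on htailint hintg measurableSet_Ioi hbound
    _ = Real.sqrt (3 * Real.pi) / 2 * Real.sqrt J + 3 * J := by
        rw [hg, integral_add hint1 hint2, hI1, hI2]
end
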